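/- arXiv:1202.2054 — 3 statements merged into one kernel-verified Lean document; each statement's English description precedes it below -/
import Mathlib

section
/- Let g : [0,∞) → ℝ be (α,m)-convex with (α,m) ∈ (0,1]², let f : [0,∞) → ℝ be (g-(α,m))-convex dominated, and let 0 ≤ a < b with f, g integrable on [a,b] and [a/m, b/m]. Then |(1/(b-a)) ∫_a^b [f(x) + m(2^α − 1) f(x/m)]/2^α dx − f((a+b)/2)| ≤ (1/(b-a)) ∫_a^b [g(x) + m(2^α − 1) g(x/m)]/2^α dx − g((a+b)/2). -/
/-- `h` is `(α,m)`-convex on `[0,∞)`. -/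
def AMConvex (α m : ℝ) (h : ℝ → ℝ) : Prop :=
  ∀ x, 0 ≤ x → ∀ y, 0 ≤ y → ∀ t ∈ Set.Icc (0:ℝ) 1,
    h (t * x + m * (1 - t) * y) ≤ t ^ α * h x + m * (1 - t ^ α) * h y

/-- `f` is `(g-(α,m))`-convex dominated on `[0,∞)`. -/
def AMDominated (α m : ℝ) (g f : ℝ → ℝ) : Prop :=
  ∀ x, 0 ≤ x → ∀ y, 0 ≤ y → ∀ t ∈ Set.Icc (0:ℝ) 1,
    |t ^ α * f x + m * (1 - t ^ α) * f y - f (t * x + m * (1 - t) * y)| ≤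
      t ^ α * g x + m * (1 - t ^ α) * g y - g (t * x + m * (1 - t) * y)

private lemma ptwise (f g : ℝ → ℝ) (α m a b : ℝ)
    (hm0 : 0 < m) (hf : AMDominated α m g f) (ha : 0 ≤ a)
    (x : ℝ) (hx : x ∈ Set.Icc a b) :
    |(f x + m * ((2:ℝ) ^ α - 1) * f ((a + b - x) / m)) / (2:ℝ) ^ α - f ((a + b) / 2)| ≤
      (g x + m * ((2:ℝ) ^ α - 1) * g ((a + b - x) / m)) / (2:ℝ) ^ α - g ((a + b) / 2) := by
  have hx0 : 0 ≤ x := ha.trans hx.1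
  have hy0 : 0 ≤ (a + b - x) / m := div_nonneg (by linarith [hx.2]) hm0.le
  have key := hf x hx0 _ hy0 (1/2) (by norm_num)
  have hP : (0:ℝ) < (2:ℝ) ^ α := Real.rpow_pos_of_pos (by norm_num) _
  have hhalf : ((1:ℝ)/2) ^ α = ((2:ℝ) ^ α)⁻¹ := by
    rw [one_div, Real.inv_rpow (by norm_num : (0:ℝ) ≤ 2)]
  have harg : (1/2) * x + m * (1 - 1/2) * ((a + b - x) / m) = (a + b) / 2 := by
    field_simp; ring
  rw [harg, hhalf] at key
  have e1 : ∀ h : ℝ → ℝ,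
      (h x + m * ((2:ℝ) ^ α - 1) * h ((a + b - x) / m)) / (2:ℝ) ^ α =
        ((2:ℝ) ^ α)⁻¹ * h x + m * (1 - ((2:ℝ) ^ α)⁻¹) * h ((a + b - x) / m) := by
    intro h; field_simp
  rw [e1 f, e1 g]
  exact key

theorem dominated_hh_first (f g : ℝ → ℝ) (α m a b : ℝ)
    (hα : α ∈ Set.Ioc (0:ℝ) 1) (hm : m ∈ Set.Ioc (0:ℝ) 1)
    (hg : AMConvex α m g) (hf : AMDominated α m g f)
    (ha : 0 ≤ a) (hab : a < b)
    (hfint : IntervalIntegrable f MeasureTheory.volume a b)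
    (hgint : IntervalIntegrable g MeasureTheory.volume a b)
    (hfint' : IntervalIntegrable f MeasureTheory.volume (a / m) (b / m))
    (hgint' : IntervalIntegrable g MeasureTheory.volume (a / m) (b / m)) :
    |(1 / (b - a)) * (∫ x in a..b, (f x + m * ((2:ℝ) ^ α - 1) * f (x / m)) / (2:ℝ) ^ α)
        - f ((a + b) / 2)| ≤
      (1 / (b - a)) * (∫ x in a..b, (g x + m * ((2:ℝ) ^ α - 1) * g (x / m)) / (2:ℝ) ^ α)
        - g ((a + b) / 2) := by
  have hm0 : 0 < m := hm.1
  have hmne : m ≠ 0 := hm0.ne'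
  have hba : (0:ℝ) < b - a := by linarith
  have hP : (0:ℝ) < (2:ℝ) ^ α := Real.rpow_pos_of_pos (by norm_num) _
  set K : ℝ := m * ((2:ℝ) ^ α - 1) with hK
  set c : ℝ := (a + b) / 2 with hc
  -- integrability of x ↦ h (x / m) on a..b
  have Idiv : ∀ h : ℝ → ℝ, IntervalIntegrable h MeasureTheory.volume (a / m) (b / m) →
      IntervalIntegrable (fun x => h (x / m)) MeasureTheory.volume a b := by
    intro h hint
    have h2 := hint.comp_mul_right (c := m⁻¹)
    have e1 : a / m / m⁻¹ = a := by field_simp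
    have e2 : b / m / m⁻¹ = b := by field_simp
    rw [e1, e2] at h2
    simpa [div_eq_mul_inv] using h2
  have If2 := Idiv f hfint'
  have Ig2 := Idiv g hgint'
  have If3 : IntervalIntegrable (fun x => f ((a + b - x) / m)) MeasureTheory.volume a b := by
    have := (If2.comp_sub_left (a + b)).symm
    simpa using this
  have Ig3 : IntervalIntegrable (fun x => g ((a + b - x) / m)) MeasureTheory.volume a b := by
    have := (Ig2.comp_sub_left (a + b)).symm
    simpa using this
  -- the two forms of the integrals
  have hrefl : ∀ h : ℝ → ℝ,
      (∫ x in a..b, h ((a + b - x) / m)) = ∫ x in a..b, h (x / m) := by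
    intro h
    have := intervalIntegral.integral_comp_sub_left (a := a) (b := b)
      (fun u => h (u / m)) (a + b)
    simpa using this
  have hsplit : ∀ (h : ℝ → ℝ) (Ih : IntervalIntegrable h MeasureTheory.volume a b)
      (Ih2 : IntervalIntegrable (fun x => h (x / m)) MeasureTheory.volume a b)
      (Ih3 : IntervalIntegrable (fun x => h ((a + b - x) / m)) MeasureTheory.volume a b),
      (∫ x in a..b, (h x + K * h (x / m)) / (2:ℝ) ^ α) =
        ∫ x in a..b, (h x + K * h ((a + b - x) / m)) / (2:ℝ) ^ α := by
    intro h Ih Ih2 Ih3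
    rw [intervalIntegral.integral_div, intervalIntegral.integral_div,
      intervalIntegral.integral_add Ih (Ih2.const_mul K),
      intervalIntegral.integral_add Ih (Ih3.const_mul K),
      intervalIntegral.integral_const_mul, intervalIntegral.integral_const_mul, hrefl h]
  rw [hsplit f hfint If2 If3, hsplit g hgint Ig2 Ig3]
  set F : ℝ → ℝ := fun x => (f x + K * f ((a + b - x) / m)) / (2:ℝ) ^ α with hF
  set G : ℝ → ℝ := fun x => (g x + K * g ((a + b - x) / m)) / (2:ℝ) ^ α with hG
  have IF : IntervalIntegrable F MeasureTheory.volume a b :=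
    (hfint.add (If3.const_mul K)).div_const _
  have IG : IntervalIntegrable G MeasureTheory.volume a b :=
    (hgint.add (Ig3.const_mul K)).div_const _
  have hpt : ∀ x ∈ Set.Icc a b, |F x - f c| ≤ G x - g c := fun x hx =>
    ptwise f g α m a b hm0 hf ha x hx
  have habs : |∫ x in a..b, (F x - f c)| ≤ ∫ x in a..b, (G x - g c) := by
    calc |∫ x in a..b, (F x - f c)| ≤ ∫ x in a..b, |F x - f c| :=
          intervalIntegral.abs_integral_le_integral_abs hab.le
      _ ≤ ∫ x in a..b, (G x - g c) := by
          apply intervalIntegral.integral_mono_on hab.le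
            ((IF.sub intervalIntegrable_const).abs)
            (IG.sub intervalIntegrable_const) hpt
  rw [intervalIntegral.integral_sub IF intervalIntegrable_const,
    intervalIntegral.integral_sub IG intervalIntegrable_const] at habs
  simp only [intervalIntegral.integral_const, smul_eq_mul] at habs
  set A : ℝ := ∫ x in a..b, F x
  set B : ℝ := ∫ x in a..b, G x
  have e1 : (1 / (b - a)) * A - f c = (1 / (b - a)) * (A - (b - a) * f c) := by
    field_simp
  have e2 : (1 / (b - a)) * B - g c = (1 / (b - a)) * (B - (b - a) * g c) := by
    field_simp
  rw [e1, e2, abs_mul, abs_of_pos (by positivity : (0:ℝ) < 1 / (b - a))]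
  exact mul_le_mul_of_nonneg_left habs (by positivity)
end

section
/- Let g : [0,∞) → ℝ be (α,m)-convex with (α,m) ∈ (0,1]², let f : [0,∞) → ℝ be (g-(α,m))-convex dominated, and let 0 ≤ a < b with f, g integrable on the relevant intervals. Then |(1/2)[(f(a) + m f(a/m))/(α+1) + mα (f(b/m) + m f(b/m²))/(α+1)] − (1/(b-a)) ∫_a^b (f(x) + m f(x/m))/2 dx| ≤ (1/2)[(g(a) + m g(a/m))/(α+1) + mα (g(b/m) + m g(b/m²))/(α+1)] − (1/(b-a)) ∫_a^b (g(x) + m g(x/m))/2 dx. -/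
open MeasureTheory intervalIntegral

section helpers

lemma subst_integrable (h : ℝ → ℝ) (a b : ℝ) (hab : a < b)
    (hi : IntervalIntegrable h volume a b) :
    IntervalIntegrable (fun t => h ((a - b) * t + b)) volume 0 1 := by
  have h1 := (hi.comp_add_right b).comp_mul_left (c := a - b)
  have hne : a - b ≠ 0 := by linarith
  simpa [div_self hne, zero_div] using h1.symm

lemma subst_integral (h : ℝ → ℝ) (a b : ℝ) (hab : a < b) :
    ∫ t in (0:ℝ)..1, h ((a - b) * t + b) = (1 / (b - a)) * ∫ x in a..b, h x := by
  have hne : a - b ≠ 0 := by linarith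
  rw [intervalIntegral.integral_comp_mul_add h hne b]
  simp only [mul_zero, zero_add, mul_one]
  rw [intervalIntegral.integral_symm]
  have : a - b + b = a := by ring
  rw [this]
  rw [smul_eq_mul]
  have h2 : (a - b)⁻¹ = -(1 / (b - a)) := by
    rw [eq_comm, neg_eq_iff_eq_neg, div_eq_iff (by linarith : b - a ≠ 0)]
    field_simp; ring
  rw [h2]; ring

lemma rpow_integrable (α : ℝ) (hα : 0 < α) :
    IntervalIntegrable (fun t : ℝ => t ^ α) volume 0 1 :=
  intervalIntegrable_rpow (Or.inl hα.le)

lemma rpow_integral (α : ℝ) (hα : 0 < α) :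
    ∫ t in (0:ℝ)..1, t ^ α = 1 / (α + 1) := by
  rw [integral_rpow (Or.inl (by linarith))]
  simp [Real.one_rpow, Real.zero_rpow (by linarith : α + 1 ≠ 0)]

lemma combo_integrable (α m p q r s : ℝ) (hα : 0 < α) (w v : ℝ → ℝ)
    (hw : IntervalIntegrable w volume 0 1) (hv : IntervalIntegrable v volume 0 1) :
    IntervalIntegrable (fun t => ((t ^ α * p + m * (1 - t ^ α) * q)
      + m * (t ^ α * r + m * (1 - t ^ α) * s)) / 2 - (w t + m * v t) / 2) volume 0 1 := by
  have hP := rpow_integrable α hα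
  have hQ : IntervalIntegrable (fun t : ℝ => 1 - t ^ α) volume 0 1 :=
    (_root_.intervalIntegrable_const (c := (1:ℝ))).sub hP
  exact ((((hP.mul_const p).add ((hQ.const_mul m).mul_const q)).add
    (((hP.mul_const r).add ((hQ.const_mul m).mul_const s)).const_mul m)).div_const 2).sub
    ((hw.add (hv.const_mul m)).div_const 2)

lemma combo_integral (α m p q r s : ℝ) (hα : 0 < α) (w v : ℝ → ℝ)
    (hw : IntervalIntegrable w volume 0 1) (hv : IntervalIntegrable v volume 0 1) :
    ∫ t in (0:ℝ)..1, (((t ^ α * p + m * (1 - t ^ α) * q)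
        + m * (t ^ α * r + m * (1 - t ^ α) * s)) / 2 - (w t + m * v t) / 2)
      = (1 / 2) * ((p + m * r) / (α + 1) + m * α * ((q + m * s) / (α + 1)))
        - ∫ t in (0:ℝ)..1, (w t + m * v t) / 2 := by
  have hP := rpow_integrable α hα
  have hwv : IntervalIntegrable (fun t => (w t + m * v t) / 2) volume 0 1 :=
    (hw.add (hv.const_mul m)).div_const 2
  have e : (fun t : ℝ => ((t ^ α * p + m * (1 - t ^ α) * q)
        + m * (t ^ α * r + m * (1 - t ^ α) * s)) / 2 - (w t + m * v t) / 2)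
      = fun t => t ^ α * ((p + m * r - m * q - m ^ 2 * s) / 2)
        + (m * q + m ^ 2 * s) / 2 - (w t + m * v t) / 2 := by
    funext t; ring
  rw [e, intervalIntegral.integral_sub
    (((hP.mul_const _).add (_root_.intervalIntegrable_const))) hwv,
    intervalIntegral.integral_add (hP.mul_const _) _root_.intervalIntegrable_const,
    intervalIntegral.integral_mul_const, rpow_integral α hα,
    intervalIntegral.integral_const]
  have hne : α + 1 ≠ 0 := by linarith
  have : 1 / (α + 1) * ((p + m * r - m * q - m ^ 2 * s) / 2) + ((1:ℝ) - 0) • ((m * q + m ^ 2 * s) / 2)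
      = 1 / 2 * ((p + m * r) / (α + 1) + m * α * ((q + m * s) / (α + 1))) := by
    rw [smul_eq_mul]; field_simp; ring
  rw [this]

end helpers

theorem dominated_hh_second (f g : ℝ → ℝ) (α m a b : ℝ)
    (hα : α ∈ Set.Ioc (0:ℝ) 1) (hm : m ∈ Set.Ioc (0:ℝ) 1)
    (hg : AMConvex α m g) (hf : AMDominated α m g f)
    (ha : 0 ≤ a) (hab : a < b)
    (hfint : IntervalIntegrable f MeasureTheory.volume a b)
    (hgint : IntervalIntegrable g MeasureTheory.volume a b)
    (hfint' : IntervalIntegrable (fun x => f (x / m)) MeasureTheory.volume a b)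
    (hgint' : IntervalIntegrable (fun x => g (x / m)) MeasureTheory.volume a b) :
    |(1 / 2) * ((f a + m * f (a / m)) / (α + 1)
          + m * α * ((f (b / m) + m * f (b / m ^ 2)) / (α + 1)))
        - (1 / (b - a)) * ∫ x in a..b, (f x + m * f (x / m)) / 2| ≤
      (1 / 2) * ((g a + m * g (a / m)) / (α + 1)
          + m * α * ((g (b / m) + m * g (b / m ^ 2)) / (α + 1)))
        - (1 / (b - a)) * ∫ x in a..b, (g x + m * g (x / m)) / 2 := by
  have hα0 : 0 < α := hα.1
  have hm0 : 0 < m := hm.1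
  have hmne : m ≠ 0 := hm0.ne'
  have hb0 : 0 < b := lt_of_le_of_lt ha hab
  -- substituted integrands
  set wf : ℝ → ℝ := fun t => f ((a - b) * t + b) with hwf
  set vf : ℝ → ℝ := fun t => f (((a - b) * t + b) / m) with hvf
  set wg : ℝ → ℝ := fun t => g ((a - b) * t + b) with hwg
  set vg : ℝ → ℝ := fun t => g (((a - b) * t + b) / m) with hvg
  have hwfi : IntervalIntegrable wf volume 0 1 := subst_integrable f a b hab hfint
  have hvfi : IntervalIntegrable vf volume 0 1 := subst_integrable (fun x => f (x / m)) a b hab hfint'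
  have hwgi : IntervalIntegrable wg volume 0 1 := subst_integrable g a b hab hgint
  have hvgi : IntervalIntegrable vg volume 0 1 := subst_integrable (fun x => g (x / m)) a b hab hgint'
  set Ff : ℝ → ℝ := fun t => ((t ^ α * f a + m * (1 - t ^ α) * f (b / m))
      + m * (t ^ α * f (a / m) + m * (1 - t ^ α) * f (b / m ^ 2))) / 2
      - (wf t + m * vf t) / 2 with hFf
  set Gg : ℝ → ℝ := fun t => ((t ^ α * g a + m * (1 - t ^ α) * g (b / m))
      + m * (t ^ α * g (a / m) + m * (1 - t ^ α) * g (b / m ^ 2))) / 2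
      - (wg t + m * vg t) / 2 with hGg
  have hFi : IntervalIntegrable Ff volume 0 1 :=
    combo_integrable α m (f a) (f (b / m)) (f (a / m)) (f (b / m ^ 2)) hα0 wf vf hwfi hvfi
  have hGi : IntervalIntegrable Gg volume 0 1 :=
    combo_integrable α m (g a) (g (b / m)) (g (a / m)) (g (b / m ^ 2)) hα0 wg vg hwgi hvgi
  -- pointwise bound
  have hpt : ∀ t ∈ Set.Icc (0:ℝ) 1, |Ff t| ≤ Gg t := by
    intro t ht
    have e1 : t * a + m * (1 - t) * (b / m) = (a - b) * t + b := by field_simp; ring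
    have e2 : t * (a / m) + m * (1 - t) * (b / m ^ 2) = ((a - b) * t + b) / m := by
      field_simp; ring
    have hA := hf a ha (b / m) (by positivity) t ht
    have hB := hf (a / m) (by positivity) (b / m ^ 2) (by positivity) t ht
    rw [e1] at hA
    rw [e2] at hB
    have key : |(t ^ α * f a + m * (1 - t ^ α) * f (b / m) - wf t)
        + m * (t ^ α * f (a / m) + m * (1 - t ^ α) * f (b / m ^ 2) - vf t)|
        ≤ (t ^ α * g a + m * (1 - t ^ α) * g (b / m) - wg t)
        + m * (t ^ α * g (a / m) + m * (1 - t ^ α) * g (b / m ^ 2) - vg t) := by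
      refine (abs_add_le _ _).trans (add_le_add hA ?_)
      rw [abs_mul, abs_of_pos hm0]
      exact mul_le_mul_of_nonneg_left hB hm0.le
    have eF : Ff t = ((t ^ α * f a + m * (1 - t ^ α) * f (b / m) - wf t)
        + m * (t ^ α * f (a / m) + m * (1 - t ^ α) * f (b / m ^ 2) - vf t)) / 2 := by
      simp only [hFf]; ring
    have eG : Gg t = ((t ^ α * g a + m * (1 - t ^ α) * g (b / m) - wg t)
        + m * (t ^ α * g (a / m) + m * (1 - t ^ α) * g (b / m ^ 2) - vg t)) / 2 := by
      simp only [hGg]; ring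
    rw [eF, eG, abs_div, abs_of_pos (by norm_num : (0:ℝ) < 2)]
    linarith
  -- integral computations
  have IF : ∫ t in (0:ℝ)..1, Ff t
      = (1 / 2) * ((f a + m * f (a / m)) / (α + 1)
          + m * α * ((f (b / m) + m * f (b / m ^ 2)) / (α + 1)))
        - ∫ t in (0:ℝ)..1, (wf t + m * vf t) / 2 :=
    combo_integral α m (f a) (f (b / m)) (f (a / m)) (f (b / m ^ 2)) hα0 wf vf hwfi hvfi
  have IG : ∫ t in (0:ℝ)..1, Gg t
      = (1 / 2) * ((g a + m * g (a / m)) / (α + 1)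
          + m * α * ((g (b / m) + m * g (b / m ^ 2)) / (α + 1)))
        - ∫ t in (0:ℝ)..1, (wg t + m * vg t) / 2 :=
    combo_integral α m (g a) (g (b / m)) (g (a / m)) (g (b / m ^ 2)) hα0 wg vg hwgi hvgi
  have Sf : ∫ t in (0:ℝ)..1, (wf t + m * vf t) / 2
      = (1 / (b - a)) * ∫ x in a..b, (f x + m * f (x / m)) / 2 :=
    subst_integral (fun x => (f x + m * f (x / m)) / 2) a b hab
  have Sg : ∫ t in (0:ℝ)..1, (wg t + m * vg t) / 2
      = (1 / (b - a)) * ∫ x in a..b, (g x + m * g (x / m)) / 2 :=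
    subst_integral (fun x => (g x + m * g (x / m)) / 2) a b hab
  rw [Sf] at IF
  rw [Sg] at IG
  rw [← IF, ← IG]
  calc |∫ t in (0:ℝ)..1, Ff t| ≤ ∫ t in (0:ℝ)..1, |Ff t| :=
        intervalIntegral.abs_integral_le_integral_abs zero_le_one
    _ ≤ ∫ t in (0:ℝ)..1, Gg t :=
        intervalIntegral.integral_mono_on zero_le_one hFi.abs hGi hpt
end

section
/- Let g : [0,∞) → ℝ be (α,m)-convex with (α,m) ∈ (0,1]², let f : [0,∞) → ℝ be (g-(α,m))-convex dominated, and let 0 ≤ a < b with f, g integrable on [a,b]. Then |(1/2)·[f(a) + f(b) + mα f(a/m) + mα f(b/m)]/(α+1) − (1/(b-a)) ∫_a^b f(x) dx| ≤ (1/2)·[g(a) + g(b) + mα g(a/m) + mα g(b/m)]/(α+1) − (1/(b-a)) ∫_a^b g(x) dx. -/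
open MeasureTheory intervalIntegral

/-- Auxiliary: integrability and value of the combined integrand. -/
lemma dht_aux (h : ℝ → ℝ) (α m a b : ℝ) (hα : 0 < α) (hab : a < b)
    (hint : IntervalIntegrable h volume a b) :
    IntervalIntegrable (fun t : ℝ =>
      t ^ α * h a + m * (1 - t ^ α) * h (b / m) - h ((a - b) * t + b) +
      (t ^ α * h b + m * (1 - t ^ α) * h (a / m) - h ((b - a) * t + a))) volume 0 1 ∧
    (∫ t in (0:ℝ)..1,
      (t ^ α * h a + m * (1 - t ^ α) * h (b / m) - h ((a - b) * t + b) +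
      (t ^ α * h b + m * (1 - t ^ α) * h (a / m) - h ((b - a) * t + a)))) =
      2 * ((1 / 2) * ((h a + h b + m * α * h (a / m) + m * α * h (b / m)) / (α + 1))
        - (1 / (b - a)) * ∫ x in a..b, h x) := by
  have hc : a - b ≠ 0 := by linarith
  have hc' : b - a ≠ 0 := by linarith
  have hα1 : α + 1 ≠ 0 := by linarith
  have hpowc : Continuous fun t : ℝ => t ^ α := Real.continuous_rpow_const hα.le
  have hpow : IntervalIntegrable (fun t : ℝ => t ^ α) volume 0 1 :=
    hpowc.intervalIntegrable 0 1
  have C1 : IntervalIntegrable (fun t : ℝ => t ^ α * h a) volume 0 1 :=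
    (hpowc.mul continuous_const).intervalIntegrable 0 1
  have C1' : IntervalIntegrable (fun t : ℝ => t ^ α * h b) volume 0 1 :=
    (hpowc.mul continuous_const).intervalIntegrable 0 1
  have C2 : IntervalIntegrable (fun t : ℝ => m * (1 - t ^ α) * h (b / m)) volume 0 1 :=
    ((continuous_const.mul (continuous_const.sub hpowc)).mul continuous_const).intervalIntegrable 0 1
  have C2' : IntervalIntegrable (fun t : ℝ => m * (1 - t ^ α) * h (a / m)) volume 0 1 :=
    ((continuous_const.mul (continuous_const.sub hpowc)).mul continuous_const).intervalIntegrable 0 1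
  have D1 : IntervalIntegrable (fun t : ℝ => h ((a - b) * t + b)) volume 0 1 := by
    have := (hint.comp_add_right b).comp_mul_left (c := a - b)
    simpa [hc, div_self hc] using this.symm
  have D2 : IntervalIntegrable (fun t : ℝ => h ((b - a) * t + a)) volume 0 1 := by
    have := (hint.comp_add_right a).comp_mul_left (c := b - a)
    simpa [hc', div_self hc'] using this
  refine ⟨((C1.add C2).sub D1).add ((C1'.add C2').sub D2), ?_⟩
  have Ipow : (∫ t in (0:ℝ)..1, t ^ α) = 1 / (α + 1) := by
    rw [integral_rpow (Or.inl (by linarith))]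
    rw [Real.one_rpow, Real.zero_rpow (by linarith)]
    ring
  have Ipc : ∀ c : ℝ, (∫ t in (0:ℝ)..1, t ^ α * c) = c / (α + 1) := by
    intro c
    rw [intervalIntegral.integral_mul_const, Ipow]; ring
  have Imc : ∀ c : ℝ, (∫ t in (0:ℝ)..1, m * (1 - t ^ α) * c) = m * α * c / (α + 1) := by
    intro c
    have : (fun t : ℝ => m * (1 - t ^ α) * c) = fun t : ℝ => (1 - t ^ α) * (m * c) := by
      funext t; ring
    rw [this, intervalIntegral.integral_mul_const, integral_sub (intervalIntegrable_const) hpow, Ipow]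
    simp
    field_simp
    ring
  have V1 : (∫ t in (0:ℝ)..1, h ((a - b) * t + b)) = (b - a)⁻¹ * ∫ x in a..b, h x := by
    rw [intervalIntegral.integral_comp_mul_add h hc b,
      show (a - b) * 0 + b = b by ring, show (a - b) * 1 + b = a by ring,
      smul_eq_mul, intervalIntegral.integral_symm a b]
    field_simp
    ring
  have V2 : (∫ t in (0:ℝ)..1, h ((b - a) * t + a)) = (b - a)⁻¹ * ∫ x in a..b, h x := by
    rw [intervalIntegral.integral_comp_mul_add h hc' a,
      show (b - a) * 0 + a = a by ring, show (b - a) * 1 + a = b by ring, smul_eq_mul]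
  rw [integral_add ((C1.add C2).sub D1) ((C1'.add C2').sub D2),
    integral_sub (C1.add C2) D1, integral_sub (C1'.add C2') D2,
    integral_add C1 C2, integral_add C1' C2', Ipc, Ipc, Imc, Imc, V1, V2]
  field_simp
  ring

theorem dominated_hh_third (f g : ℝ → ℝ) (α m a b : ℝ)
    (hα : α ∈ Set.Ioc (0:ℝ) 1) (hm : m ∈ Set.Ioc (0:ℝ) 1)
    (hg : AMConvex α m g) (hf : AMDominated α m g f)
    (ha : 0 ≤ a) (hab : a < b)
    (hfint : IntervalIntegrable f MeasureTheory.volume a b)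
    (hgint : IntervalIntegrable g MeasureTheory.volume a b) :
    |(1 / 2) * ((f a + f b + m * α * f (a / m) + m * α * f (b / m)) / (α + 1))
        - (1 / (b - a)) * ∫ x in a..b, f x| ≤
      (1 / 2) * ((g a + g b + m * α * g (a / m) + m * α * g (b / m)) / (α + 1))
        - (1 / (b - a)) * ∫ x in a..b, g x := by
  have hm' : m ≠ 0 := ne_of_gt hm.1
  have hb : 0 ≤ b := le_trans ha hab.le
  have ham : 0 ≤ a / m := div_nonneg ha hm.1.le
  have hbm : 0 ≤ b / m := div_nonneg hb hm.1.le
  have e1 : ∀ t : ℝ, t * a + m * (1 - t) * (b / m) = (a - b) * t + b := by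
    intro t; field_simp; ring
  have e2 : ∀ t : ℝ, t * b + m * (1 - t) * (a / m) = (b - a) * t + a := by
    intro t; field_simp; ring
  obtain ⟨hFint, hFeq⟩ := dht_aux f α m a b hα.1 hab hfint
  obtain ⟨hGint, hGeq⟩ := dht_aux g α m a b hα.1 hab hgint
  have hpt : ∀ t ∈ Set.Icc (0:ℝ) 1,
      |t ^ α * f a + m * (1 - t ^ α) * f (b / m) - f ((a - b) * t + b) +
        (t ^ α * f b + m * (1 - t ^ α) * f (a / m) - f ((b - a) * t + a))| ≤
      t ^ α * g a + m * (1 - t ^ α) * g (b / m) - g ((a - b) * t + b) +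
        (t ^ α * g b + m * (1 - t ^ α) * g (a / m) - g ((b - a) * t + a)) := by
    intro t ht
    have h1 := hf a ha (b / m) hbm t ht
    have h2 := hf b hb (a / m) ham t ht
    rw [e1 t] at h1
    rw [e2 t] at h2
    exact (abs_add_le _ _).trans (add_le_add h1 h2)
  have key :
      |∫ t in (0:ℝ)..1,
        (t ^ α * f a + m * (1 - t ^ α) * f (b / m) - f ((a - b) * t + b) +
          (t ^ α * f b + m * (1 - t ^ α) * f (a / m) - f ((b - a) * t + a)))| ≤
      ∫ t in (0:ℝ)..1,
        (t ^ α * g a + m * (1 - t ^ α) * g (b / m) - g ((a - b) * t + b) +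
          (t ^ α * g b + m * (1 - t ^ α) * g (a / m) - g ((b - a) * t + a))) :=
    (intervalIntegral.abs_integral_le_integral_abs zero_le_one).trans
      (intervalIntegral.integral_mono_on zero_le_one hFint.abs hGint hpt)
  rw [hFeq, hGeq, abs_mul, abs_two] at key
  linarith [abs_nonneg ((1 / 2) * ((f a + f b + m * α * f (a / m) + m * α * f (b / m)) / (α + 1))
        - (1 / (b - a)) * ∫ x in a..b, f x)]
end
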